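/- Let G be a connected undirected graph on [n] with n≥4, let P be an all-pairs set of paths for G, and let L be an integer with 2≤L≤√n. If x∈{1}×[n]^L is good and b1∈{0,1}, then Σ_{F∈X} r(g_{x,b1},F) ≥ (1/(2e))·L·n^{L+1}. -/

import Mathlib

open Finset

/-- An all-pairs set of simple paths in `G`, with `P^{u,u}` the trivial path. -/
structure PathSystem {n : ℕ} (G : SimpleGraph (Fin n)) where
  path : ∀ u v : Fin n, G.Walk u v
  isPath : ∀ u v : Fin n, (path u v).IsPath
  diag : ∀ u : Fin n, path u u = SimpleGraph.Walk.nil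

/-- Vertex congestion of a path system: max over vertices of total occurrences. -/
def PathSystem.congestion {n : ℕ} {G : SimpleGraph (Fin n)} (P : PathSystem G) : ℕ :=
  Finset.univ.sup fun w : Fin n =>
    ∑ u : Fin n, ∑ v : Fin n, (P.path u v).support.count w

/-- Support of the `i`-th quasi-segment `P^{x_i, x_{i+1}}` (0-based). -/
def segSupport {n L : ℕ} {G : SimpleGraph (Fin n)} (P : PathSystem G)
    (x : Fin (L + 1) → Fin n) (i : ℕ) : List (Fin n) :=
  (P.path (x ⟨min i L, by omega⟩) (x ⟨min (i + 1) L, by omega⟩)).support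

/-- Support of the staircase walk `P^{x_j,x_{j+1}} ∘ ⋯ ∘ P^{x_{L-1},x_L}` (0-based `j`). -/
def stairSupportFrom {n L : ℕ} {G : SimpleGraph (Fin n)} (P : PathSystem G)
    (x : Fin (L + 1) → Fin n) (j : ℕ) : List (Fin n) :=
  x ⟨min j L, by omega⟩ ::
    (List.ofFn fun k : Fin (L - j) =>
      (P.path (x ⟨j + k, by have := k.isLt; omega⟩)
              (x ⟨j + k + 1, by have := k.isLt; omega⟩)).support.tail).flatten

/-- `Tail(j, S_x)` (0-based `j`): the staircase from `x_j` with the first occurrence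
of `x_j` removed. -/
def tailSupport {n L : ℕ} {G : SimpleGraph (Fin n)} (P : PathSystem G)
    (x : Fin (L + 1) → Fin n) (j : ℕ) : List (Fin n) :=
  (stairSupportFrom P x j).erase (x ⟨min j L, by omega⟩)

/-- Largest 0-based index `i` such that the prefixes `x_0 … x_i` and `y_0 … y_i` agree
(`J_{x,y} - 1` in 1-based notation). -/
def J0 {n L : ℕ} (x y : Fin (L + 1) → Fin n) : ℕ :=
  (Finset.univ.filter fun i : Fin (L + 1) => ∀ k ≤ i, x k = y k).sup fun i => (i : ℕ)

/-- `q_v(u)`: the number of paths in `P` starting at `u` that contain `v`. -/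
def qcount {n : ℕ} {G : SimpleGraph (Fin n)} (P : PathSystem G) (v u : Fin n) : ℕ :=
  (Finset.univ.filter fun w : Fin n => v ∈ (P.path u w).support).card

/-- Largest 0-based index `i` with `v ∈ P^{x_i,x_{i+1}}`. -/
def maxSegIdx {n L : ℕ} {G : SimpleGraph (Fin n)} (P : PathSystem G)
    (x : Fin (L + 1) → Fin n) (v : Fin n) : ℕ :=
  ((Finset.range L).filter fun i => v ∈ segSupport P x i).sup id

/-- The function `f_x`. -/
noncomputable def fS {n L : ℕ} {G : SimpleGraph (Fin n)} (P : PathSystem G)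
    (x : Fin (L + 1) → Fin n) (v : Fin n) : ℤ :=
  if v ∈ stairSupportFrom P x 0 then
    -(((maxSegIdx P x v : ℤ) + 1) * n) - (((segSupport P x (maxSegIdx P x v)).idxOf v : ℤ) + 1)
  else (G.dist v (x 0) : ℤ)

/-- The function `g_{x,b}`. -/
noncomputable def gS {n L : ℕ} {G : SimpleGraph (Fin n)} (P : PathSystem G)
    (x : Fin (L + 1) → Fin n) (b : ℤ) (v : Fin n) : ℤ × ℤ :=
  if v = x (Fin.last L) then (fS P x v, b) else (fS P x v, -1)

/-- The relation `r*`. -/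
noncomputable def rstar {n L : ℕ} (x y : Fin (L + 1) → Fin n) (b1 b2 : ℤ) : ℝ :=
  if b1 = b2 ∨ ¬ Function.Injective x ∨ ¬ Function.Injective y then 0
  else (n : ℝ) ^ (J0 x y + 1)

/-- The relation `r`. -/
noncomputable def rrel {n L : ℕ} (x y : Fin (L + 1) → Fin n) (b1 b2 : ℤ) : ℝ :=
  if x = y then 0 else rstar x y b1 b2

/-- The relation `r'`. -/
noncomputable def rprime {n L : ℕ} {G : SimpleGraph (Fin n)} (P : PathSystem G) (g : ℕ)
    (x y : Fin (L + 1) → Fin n) (b1 b2 : ℤ) (v : Fin n) : ℝ :=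
  if gS P x b1 v = gS P y b2 v ∨ b1 = b2 then 0
  else if v ∈ tailSupport P x (J0 x y) ∧ v ∉ tailSupport P y (J0 x y) then
    rrel x y b1 b2 * g / (n : ℝ) ^ (1.5 : ℝ)
  else if v ∈ tailSupport P y (J0 x y) ∧ v ∉ tailSupport P x (J0 x y) then
    rrel x y b1 b2 * (n : ℝ) ^ (1.5 : ℝ) / g
  else rrel x y b1 b2

/-- The vertex congestion of the graph `G`. -/
noncomputable def vertexCongestion {n : ℕ} (G : SimpleGraph (Fin n)) : ℕ :=
  sInf {c | ∃ P : PathSystem G, P.congestion = c}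

/-- The number of cut edges `|E(S, V∖S)|`. -/
def cutEdges {n : ℕ} (G : SimpleGraph (Fin n)) [DecidableRel G.Adj]
    (S : Finset (Fin n)) : ℕ :=
  ((S ×ˢ Sᶜ).filter fun p => G.Adj p.1 p.2).card



-- ===== auxiliary lemmas for stmt4 =====

/-- Number of injective tuples avoiding a set `T`. -/
lemma stmt4_count_avoid (n : ℕ) : ∀ (m : ℕ) (T : Finset (Fin n)),
    (Finset.univ.filter fun f : Fin m → Fin n =>
      Function.Injective f ∧ ∀ k, f k ∉ T).card = (n - T.card).descFactorial m := by
  intro m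
  induction m with
  | zero =>
    intro T
    rw [Nat.descFactorial_zero, Finset.card_eq_one]
    refine ⟨fun k => k.elim0, ?_⟩
    ext f
    simp only [Finset.mem_filter, Finset.mem_univ, true_and, Finset.mem_singleton]
    constructor
    · intro _
      funext k; exact k.elim0
    · rintro rfl
      exact ⟨fun a b _ => a.elim0, fun k => k.elim0⟩
  | succ m ih =>
    intro T
    have hmaps : ∀ f ∈ (Finset.univ.filter fun f : Fin (m+1) → Fin n =>
        Function.Injective f ∧ ∀ k, f k ∉ T), f 0 ∈ Tᶜ := by
      intro f hf
      simp only [Finset.mem_filter, Finset.mem_univ, true_and] at hf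
      simpa using hf.2 0
    rw [Finset.card_eq_sum_card_fiberwise hmaps]
    have hfib : ∀ v ∈ Tᶜ, ((Finset.univ.filter fun f : Fin (m+1) → Fin n =>
        Function.Injective f ∧ ∀ k, f k ∉ T).filter fun f => f 0 = v).card
        = (n - T.card - 1).descFactorial m := by
      intro v hv
      have hvT : v ∉ T := by simpa using hv
      rw [Finset.filter_filter]
      have hins := ih (insert v T)
      rw [Finset.card_insert_of_notMem hvT, ← Nat.sub_sub] at hins
      rw [← hins]
      apply Finset.card_nbij' (fun f => f ∘ Fin.succ) (fun g => Fin.cons v g)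
      · intro f hf
        simp only [Finset.mem_coe, Finset.mem_filter, Finset.mem_univ, true_and] at hf ⊢
        obtain ⟨⟨hinj, havoid⟩, h0⟩ := hf
        refine ⟨hinj.comp (Fin.succ_injective m), ?_⟩
        intro k
        simp only [Function.comp_apply, Finset.mem_insert]
        push_neg
        refine ⟨fun h => (Fin.succ_ne_zero k) (hinj (h.trans h0.symm)), havoid k.succ⟩
      · intro g hg
        simp only [Finset.mem_coe, Finset.mem_filter, Finset.mem_univ, true_and] at hg ⊢
        obtain ⟨hinj, havoid⟩ := hg
        have hvr : v ∉ Set.range g := by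
          rintro ⟨k, rfl⟩
          exact havoid k (Finset.mem_insert_self _ _)
        refine ⟨⟨?_, ?_⟩, ?_⟩
        · rw [Fin.cons_injective_iff]
          exact ⟨hvr, hinj⟩
        · intro k
          refine Fin.cases ?_ ?_ k
          · simpa [Fin.cons_zero] using hvT
          · intro k'
            simp only [Fin.cons_succ]
            exact fun h => havoid k' (Finset.mem_insert_of_mem h)
        · simp [Fin.cons_zero]
      · intro f hf
        simp only [Finset.mem_coe, Finset.mem_filter, Finset.mem_univ, true_and] at hf
        funext k
        refine Fin.cases ?_ ?_ k
        · beta_reduce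
          rw [Fin.cons_zero]
          exact hf.2.symm
        · intro k'
          beta_reduce
          rw [Fin.cons_succ]
          rfl
      · intro g hg
        funext k
        simp [Fin.cons_succ]
    rw [Finset.sum_congr rfl hfib, Finset.sum_const, Finset.card_compl, Fintype.card_fin,
      smul_eq_mul]
    rcases Nat.eq_zero_or_pos (n - T.card) with h0 | hpos
    · rw [h0, Nat.zero_mul, Nat.zero_descFactorial_succ]
    · conv_rhs => rw [show n - T.card = (n - T.card - 1) + 1 by omega]
      rw [Nat.succ_descFactorial_succ]
      congr 1
      omega

/-- Restriction of a tuple to the coordinates from `s` on. -/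
def stmt4_shrink {n L : ℕ} (s : ℕ) (y : Fin (L+1) → Fin n) : Fin (L+1-s) → Fin n :=
  fun k => y ⟨s + (k : ℕ), by have := k.isLt; omega⟩

/-- Extension of a tuple by the prefix of `x`. -/
def stmt4_expand {n L : ℕ} (s : ℕ) (x : Fin (L+1) → Fin n) (f : Fin (L+1-s) → Fin n) :
    Fin (L+1) → Fin n :=
  fun k => if h : (k : ℕ) < s then x k else f ⟨(k : ℕ) - s, by have := k.isLt; omega⟩

/-- Number of injective tuples with a prescribed injective prefix. -/
lemma stmt4_cardE {n L : ℕ} (x : Fin (L+1) → Fin n) (hx : Function.Injective x)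
    (s : ℕ) (hs : s ≤ L + 1) :
    (Finset.univ.filter fun y : Fin (L+1) → Fin n =>
      Function.Injective y ∧ ∀ k : Fin (L+1), (k : ℕ) < s → y k = x k).card
      = (n - s).descFactorial (L + 1 - s) := by
  classical
  have hall : ∀ m ∈ Finset.range s, m < L + 1 := fun m hm => by
    simp only [Finset.mem_range] at hm; omega
  obtain ⟨T, hTdef⟩ : ∃ T : Finset (Fin n), T = ((Finset.range s).attachFin hall).image x :=
    ⟨_, rfl⟩
  have hTcard : T.card = s := by
    rw [hTdef, Finset.card_image_of_injective _ hx, Finset.card_attachFin, Finset.card_range]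
  have hmemT : ∀ v : Fin n, v ∈ T ↔ ∃ k : Fin (L+1), (k : ℕ) < s ∧ x k = v := by
    intro v
    simp only [hTdef, Finset.mem_image, Finset.mem_attachFin, Finset.mem_range]
  have hi : ∀ y ∈ (Finset.univ.filter fun y : Fin (L+1) → Fin n =>
      Function.Injective y ∧ ∀ k : Fin (L+1), (k : ℕ) < s → y k = x k),
      stmt4_shrink s y ∈ (Finset.univ.filter fun f : Fin (L+1-s) → Fin n =>
        Function.Injective f ∧ ∀ k, f k ∉ T) := by
    intro y hy
    simp only [Finset.mem_filter, Finset.mem_univ, true_and] at hy ⊢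
    obtain ⟨hyinj, hypre⟩ := hy
    constructor
    · intro k1 k2 h
      simp only [stmt4_shrink] at h
      have h2 := congrArg Fin.val (hyinj h)
      simp only at h2
      exact Fin.ext (by omega)
    · intro k hk
      simp only [stmt4_shrink] at hk
      rw [hmemT] at hk
      obtain ⟨j, hj, hjeq⟩ := hk
      have hyj : y j = x j := hypre j hj
      have h3 := hyinj (hyj.trans hjeq)
      have h4 := congrArg Fin.val h3
      simp only at h4
      omega
  have hj : ∀ f ∈ (Finset.univ.filter fun f : Fin (L+1-s) → Fin n =>
      Function.Injective f ∧ ∀ k, f k ∉ T),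
      stmt4_expand s x f ∈ (Finset.univ.filter fun y : Fin (L+1) → Fin n =>
        Function.Injective y ∧ ∀ k : Fin (L+1), (k : ℕ) < s → y k = x k) := by
    intro f hf
    simp only [Finset.mem_filter, Finset.mem_univ, true_and] at hf ⊢
    obtain ⟨hfinj, hfavoid⟩ := hf
    constructor
    · intro k1 k2 h
      simp only [stmt4_expand] at h
      by_cases h1 : (k1 : ℕ) < s <;> by_cases h2 : (k2 : ℕ) < s
      · rw [dif_pos h1, dif_pos h2] at h
        exact hx h
      · rw [dif_pos h1, dif_neg h2] at h
        exact absurd ((hmemT _).2 ⟨k1, h1, h⟩) (hfavoid _)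
      · rw [dif_neg h1, dif_pos h2] at h
        exact absurd ((hmemT _).2 ⟨k2, h2, h.symm⟩) (hfavoid _)
      · rw [dif_neg h1, dif_neg h2] at h
        have h3 := congrArg Fin.val (hfinj h)
        simp only at h3
        exact Fin.ext (by omega)
    · intro k hk
      simp only [stmt4_expand]
      rw [dif_pos hk]
  have hleft : ∀ y ∈ (Finset.univ.filter fun y : Fin (L+1) → Fin n =>
      Function.Injective y ∧ ∀ k : Fin (L+1), (k : ℕ) < s → y k = x k),
      stmt4_expand s x (stmt4_shrink s y) = y := by
    intro y hy
    simp only [Finset.mem_filter, Finset.mem_univ, true_and] at hy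
    funext k
    simp only [stmt4_expand, stmt4_shrink]
    by_cases hk : (k : ℕ) < s
    · rw [dif_pos hk]
      exact (hy.2 k hk).symm
    · rw [dif_neg hk]
      exact congrArg y (Fin.ext (by simp only; omega))
  have hright : ∀ f ∈ (Finset.univ.filter fun f : Fin (L+1-s) → Fin n =>
      Function.Injective f ∧ ∀ k, f k ∉ T),
      stmt4_shrink s (stmt4_expand s x f) = f := by
    intro f _
    funext k
    simp only [stmt4_expand, stmt4_shrink]
    have hns : ¬ (s + (k : ℕ) < s) := by omega
    rw [dif_neg hns]
    exact congrArg f (Fin.ext (by simp only; omega))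
  have hcnt := stmt4_count_avoid n (L + 1 - s) T
  rw [hTcard] at hcnt
  rw [← hcnt]
  exact Finset.card_nbij' (stmt4_shrink s) (stmt4_expand s x) hi hj hleft hright

/-- Cardinality of the class of tuples agreeing with `x` strictly before `j` and
disagreeing at `j`. -/
lemma stmt4_cardA {n L : ℕ} (x : Fin (L+1) → Fin n) (hx : Function.Injective x)
    (hnL : L + 2 ≤ n) (j : Fin (L+1)) (hj : 1 ≤ (j : ℕ)) :
    (Finset.univ.filter fun y : Fin (L+1) → Fin n =>
      Function.Injective y ∧ (∀ k : Fin (L+1), (k : ℕ) < (j : ℕ) → y k = x k) ∧ y j ≠ x j).card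
      = (n - (j : ℕ) - 1) * (n - (j : ℕ) - 1).descFactorial (L - (j : ℕ)) := by
  classical
  have hjL : (j : ℕ) ≤ L := by omega
  have hsplit : (Finset.univ.filter fun y : Fin (L+1) → Fin n =>
      Function.Injective y ∧ (∀ k : Fin (L+1), (k : ℕ) < (j : ℕ) → y k = x k) ∧ y j ≠ x j)
      = (Finset.univ.filter fun y : Fin (L+1) → Fin n =>
          Function.Injective y ∧ ∀ k : Fin (L+1), (k : ℕ) < (j : ℕ) → y k = x k)
        \ (Finset.univ.filter fun y : Fin (L+1) → Fin n =>
          Function.Injective y ∧ ∀ k : Fin (L+1), (k : ℕ) < (j : ℕ) + 1 → y k = x k) := by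
    ext y
    simp only [Finset.mem_filter, Finset.mem_univ, true_and, Finset.mem_sdiff]
    constructor
    · rintro ⟨hyinj, hpre, hne⟩
      refine ⟨⟨hyinj, hpre⟩, ?_⟩
      rintro ⟨-, hpre'⟩
      exact hne (hpre' j (by omega))
    · rintro ⟨⟨hyinj, hpre⟩, hnot⟩
      refine ⟨hyinj, hpre, ?_⟩
      intro heq
      apply hnot
      refine ⟨hyinj, ?_⟩
      intro k hk
      by_cases hk' : (k : ℕ) < (j : ℕ)
      · exact hpre k hk'
      · have : k = j := Fin.ext (by omega)
        rw [this]; exact heq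
  have hsub : (Finset.univ.filter fun y : Fin (L+1) → Fin n =>
          Function.Injective y ∧ ∀ k : Fin (L+1), (k : ℕ) < (j : ℕ) + 1 → y k = x k)
      ⊆ (Finset.univ.filter fun y : Fin (L+1) → Fin n =>
          Function.Injective y ∧ ∀ k : Fin (L+1), (k : ℕ) < (j : ℕ) → y k = x k) := by
    intro y hy
    simp only [Finset.mem_filter, Finset.mem_univ, true_and] at hy ⊢
    exact ⟨hy.1, fun k hk => hy.2 k (by omega)⟩
  rw [hsplit, Finset.card_sdiff_of_subset hsub, stmt4_cardE x hx ((j : ℕ)) (by omega),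
    stmt4_cardE x hx ((j : ℕ) + 1) (by omega)]
  have h1 : L + 1 - (j : ℕ) = (L - (j : ℕ)) + 1 := by omega
  have h2 : L + 1 - ((j : ℕ) + 1) = L - (j : ℕ) := by omega
  have h3 : n - (j : ℕ) = (n - (j : ℕ) - 1) + 1 := by omega
  have h4 : n - ((j : ℕ) + 1) = n - (j : ℕ) - 1 := by omega
  have h5 : (n - (j : ℕ)).descFactorial (L + 1 - (j : ℕ))
      = (n - (j : ℕ)) * (n - (j : ℕ) - 1).descFactorial (L - (j : ℕ)) := by
    rw [h1]
    conv_lhs => rw [h3]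
    rw [Nat.succ_descFactorial_succ]
    congr 1
    omega
  rw [h4, h2, h5]
  generalize (n - (j : ℕ) - 1).descFactorial (L - (j : ℕ)) = D
  conv_lhs => rw [h3]
  rw [Nat.succ_mul, Nat.add_sub_cancel]

/-- `(1 - 1/L)^L ≥ 1/(2e)` for `L ≥ 2`. -/
lemma stmt4_pow_ineq (L : ℕ) (hL : 2 ≤ L) :
    1 / (2 * Real.exp 1) ≤ (1 - 1 / (L : ℝ)) ^ L := by
  have hl : (2 : ℝ) ≤ (L : ℝ) := by exact_mod_cast hL
  have hl0 : (0 : ℝ) < (L : ℝ) := by linarith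
  have hm : (0 : ℝ) < (L : ℝ) - 1 := by linarith
  have h1 : (0 : ℝ) ≤ 1 - 1 / (L : ℝ) := by
    rw [sub_nonneg, div_le_one hl0]; linarith
  have hfrac : 1 - 1 / (L : ℝ) = ((L : ℝ) - 1) / (L : ℝ) := by
    field_simp
  have hexp : (L : ℝ) / ((L : ℝ) - 1) ≤ Real.exp (1 / ((L : ℝ) - 1)) := by
    have h := Real.add_one_le_exp (1 / ((L : ℝ) - 1))
    have : (L : ℝ) / ((L : ℝ) - 1) = 1 / ((L : ℝ) - 1) + 1 := by field_simp; ring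
    linarith
  have hpos : (0 : ℝ) < (L : ℝ) / ((L : ℝ) - 1) := by positivity
  have hainv : Real.exp (-(1 / ((L : ℝ) - 1))) ≤ 1 - 1 / (L : ℝ) := by
    rw [Real.exp_neg, hfrac]
    have h2 : (((L : ℝ)) / ((L : ℝ) - 1))⁻¹ = ((L : ℝ) - 1) / (L : ℝ) := by
      rw [inv_div]
    rw [← h2]
    exact inv_anti₀ hpos hexp
  have hb : Real.exp (-1) ≤ (1 - 1 / (L : ℝ)) ^ (L - 1) := by
    have hcast : ((L - 1 : ℕ) : ℝ) = (L : ℝ) - 1 := by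
      have : 1 ≤ L := by omega
      push_cast [Nat.cast_sub this]
      ring
    calc Real.exp (-1) = Real.exp (-(1 / ((L : ℝ) - 1))) ^ (L - 1) := by
          rw [← Real.exp_nat_mul]
          congr 1
          rw [hcast]
          field_simp
      _ ≤ (1 - 1 / (L : ℝ)) ^ (L - 1) :=
          pow_le_pow_left₀ (Real.exp_pos _).le hainv _
  have hc : (1 / 2 : ℝ) ≤ 1 - 1 / (L : ℝ) := by
    have : 1 / (L : ℝ) ≤ 1 / 2 := by
      apply one_div_le_one_div_of_le <;> linarith
    linarith
  have hfin : Real.exp (-1) * (1 / 2) ≤ (1 - 1 / (L : ℝ)) ^ (L - 1) * (1 - 1 / (L : ℝ)) :=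
    mul_le_mul hb hc (by norm_num) (pow_nonneg h1 _)
  calc 1 / (2 * Real.exp 1) = Real.exp (-1) * (1 / 2) := by
        rw [Real.exp_neg]
        ring
    _ ≤ (1 - 1 / (L : ℝ)) ^ (L - 1) * (1 - 1 / (L : ℝ)) := hfin
    _ = (1 - 1 / (L : ℝ)) ^ L := by
        rw [← pow_succ]
        congr 1
        omega

/-- Per-class numeric bound. -/
lemma stmt4_key_ineq (n L s : ℕ) (hL : 2 ≤ L) (hs1 : 1 ≤ s) (hsL : s ≤ L)
    (hLn : L * L ≤ n) :
    (n : ℝ) ^ (L + 1) / (2 * Real.exp 1)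
      ≤ (n : ℝ) ^ s * (((n - s - 1) * (n - s - 1).descFactorial (L - s) : ℕ) : ℝ) := by
  have h2L : 2 * L ≤ L * L := Nat.mul_le_mul_right L hL
  have hnL2 : L + 2 ≤ n := by omega
  have hn0 : (0 : ℝ) < (n : ℝ) := by
    have : 0 < n := by omega
    exact_mod_cast this
  have hexp2 : (2 : ℝ) ≤ Real.exp 1 := by
    have := Real.add_one_le_exp (1 : ℝ)
    linarith
  have hl0 : (0 : ℝ) < (L : ℝ) := by exact_mod_cast (by omega : 0 < L)
  have hLn' : (L : ℝ) * (L : ℝ) ≤ (n : ℝ) := by exact_mod_cast hLn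
  have h1' : (0 : ℝ) ≤ 1 - 1 / (L : ℝ) := by
    rw [sub_nonneg, div_le_one hl0]
    exact_mod_cast (by omega : 1 ≤ L)
  rcases eq_or_lt_of_le hsL with hEq | hlt
  · -- s = L
    subst hEq
    rw [Nat.sub_self, Nat.descFactorial_zero, Nat.mul_one]
    have hcast : ((n - s - 1 : ℕ) : ℝ) = (n : ℝ) - (s : ℝ) - 1 := by
      have h' : s + 1 ≤ n := by omega
      have h'' : n - s - 1 = n - (s + 1) := by omega
      rw [h'', Nat.cast_sub h']
      push_cast
      ring
    have h2Ln : 2 * (s : ℝ) ≤ (n : ℝ) := by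
      have : 2 * s ≤ n := by omega
      exact_mod_cast this
    have hn4 : (4 : ℝ) ≤ (n : ℝ) := by
      have : 4 ≤ n := by omega
      exact_mod_cast this
    have hquarter : (n : ℝ) / 4 ≤ ((n - s - 1 : ℕ) : ℝ) := by
      rw [hcast]
      have hs4 : (s : ℝ) ≤ (n : ℝ) / 2 := by linarith
      linarith
    calc (n : ℝ) ^ (s + 1) / (2 * Real.exp 1) ≤ (n : ℝ) ^ (s + 1) / 4 := by
          have h4e : (4 : ℝ) ≤ 2 * Real.exp 1 := by linarith
          gcongr
      _ = (n : ℝ) ^ s * ((n : ℝ) / 4) := by rw [pow_succ]; ring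
      _ ≤ (n : ℝ) ^ s * ((n - s - 1 : ℕ) : ℝ) := by
          apply mul_le_mul_of_nonneg_left hquarter (by positivity)
  · -- s < L
    have hdesc := Nat.pow_sub_le_descFactorial (n - s - 1) (L - s)
    have harg : n - s - 1 + 1 - (L - s) = n - L := by omega
    rw [harg] at hdesc
    have hnat : (n - L) ^ (L + 1 - s) ≤ (n - s - 1) * (n - s - 1).descFactorial (L - s) := by
      have he : L + 1 - s = (L - s) + 1 := by omega
      rw [he, pow_succ']
      exact Nat.mul_le_mul (by omega) hdesc
    have hA : (n : ℝ) * (1 - 1 / (L : ℝ)) ≤ ((n - L : ℕ) : ℝ) := by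
      have hcast : ((n - L : ℕ) : ℝ) = (n : ℝ) - (L : ℝ) := by
        rw [Nat.cast_sub (by omega : L ≤ n)]
      have hdivL : (L : ℝ) ≤ (n : ℝ) / (L : ℝ) := by
        rw [le_div_iff₀ hl0]
        exact hLn'
      have hexpand : (n : ℝ) * (1 - 1 / (L : ℝ)) = (n : ℝ) - (n : ℝ) / (L : ℝ) := by
        rw [mul_sub, mul_one, mul_one_div]
      rw [hcast, hexpand]
      linarith
    have hB : ((n : ℝ) * (1 - 1 / (L : ℝ))) ^ (L + 1 - s) ≤ ((n - L : ℕ) : ℝ) ^ (L + 1 - s) :=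
      pow_le_pow_left₀ (by positivity) hA _
    have hC : (1 - 1 / (L : ℝ)) ^ L ≤ (1 - 1 / (L : ℝ)) ^ (L + 1 - s) := by
      apply pow_le_pow_of_le_one h1' ?_ (by omega)
      have : (0:ℝ) ≤ 1 / (L : ℝ) := by positivity
      linarith
    have hpow : (n : ℝ) ^ (L + 1) = (n : ℝ) ^ s * (n : ℝ) ^ (L + 1 - s) := by
      rw [← pow_add]
      congr 1
      omega
    calc (n : ℝ) ^ (L + 1) / (2 * Real.exp 1) = (n : ℝ) ^ (L + 1) * (1 / (2 * Real.exp 1)) := by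
          ring
      _ ≤ (n : ℝ) ^ (L + 1) * ((1 - 1 / (L : ℝ)) ^ L) :=
          mul_le_mul_of_nonneg_left (stmt4_pow_ineq L hL) (by positivity)
      _ ≤ (n : ℝ) ^ (L + 1) * ((1 - 1 / (L : ℝ)) ^ (L + 1 - s)) :=
          mul_le_mul_of_nonneg_left hC (by positivity)
      _ = (n : ℝ) ^ s * (((n : ℝ) * (1 - 1 / (L : ℝ))) ^ (L + 1 - s)) := by
          rw [mul_pow, hpow]
          ring
      _ ≤ (n : ℝ) ^ s * (((n - L : ℕ) : ℝ) ^ (L + 1 - s)) :=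
          mul_le_mul_of_nonneg_left hB (by positivity)
      _ ≤ (n : ℝ) ^ s * (((n - s - 1) * (n - s - 1).descFactorial (L - s) : ℕ) : ℝ) := by
          apply mul_le_mul_of_nonneg_left _ (by positivity)
          rw [show (((n - L : ℕ) : ℝ) ^ (L + 1 - s)) = (((n - L) ^ (L + 1 - s) : ℕ) : ℝ) by push_cast; ring]
          exact_mod_cast hnat

theorem stmt4 {n L : ℕ} (hn : 4 ≤ n) (hL2 : 2 ≤ L) (hLn : (L : ℝ) ≤ Real.sqrt n)
    (G : SimpleGraph (Fin n)) (hG : G.Connected) (P : PathSystem G)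
    (x : Fin (L + 1) → Fin n) (hx1 : x 0 = ⟨0, by omega⟩)
    (hxgood : Function.Injective x)
    (b1 : ℤ) (hb1 : b1 = 0 ∨ b1 = 1) :
    (1 / (2 * Real.exp 1)) * (L : ℝ) * (n : ℝ) ^ (L + 1)
      ≤ ∑ y ∈ Finset.univ.filter (fun y : Fin (L + 1) → Fin n => y 0 = (⟨0, by omega⟩ : Fin n)),
          ∑ b2 ∈ ({0, 1} : Finset ℤ), rrel x y b1 b2 := by
  classical
  -- numeric facts
  have hLLn : L * L ≤ n := by
    have h := Real.sqrt_nonneg (n : ℝ)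
    have hr : (L : ℝ) * (L : ℝ) ≤ (n : ℝ) := by
      calc (L : ℝ) * (L : ℝ) ≤ Real.sqrt (n : ℝ) * Real.sqrt (n : ℝ) :=
            mul_le_mul hLn hLn (by positivity) h
        _ = (n : ℝ) := Real.mul_self_sqrt (by positivity)
    exact_mod_cast hr
  have h2L : 2 * L ≤ L * L := Nat.mul_le_mul_right L hL2
  have hnL2 : L + 2 ≤ n := by omega
  have hn1 : (1 : ℝ) ≤ (n : ℝ) := by exact_mod_cast (by omega : 1 ≤ n)
  -- the classes A j
  set A : Fin (L + 1) → Finset (Fin (L + 1) → Fin n) := fun j =>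
    Finset.univ.filter fun y => Function.Injective y ∧
      (∀ k : Fin (L + 1), (k : ℕ) < (j : ℕ) → y k = x k) ∧ y j ≠ x j with hA
  clear_value A
  -- nonnegativity of rrel
  have hrrel_nonneg : ∀ (y : Fin (L + 1) → Fin n) (b2 : ℤ), 0 ≤ rrel x y b1 b2 := by
    intro y b2
    unfold rrel rstar
    split_ifs <;> positivity
  have hinner_nonneg : ∀ y : Fin (L + 1) → Fin n,
      0 ≤ ∑ b2 ∈ ({0, 1} : Finset ℤ), rrel x y b1 b2 :=
    fun y => Finset.sum_nonneg fun b2 _ => hrrel_nonneg y b2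
  -- value of the inner sum for good y ≠ x
  have hinner : ∀ y : Fin (L + 1) → Fin n, Function.Injective y → x ≠ y →
      ∑ b2 ∈ ({0, 1} : Finset ℤ), rrel x y b1 b2 = (n : ℝ) ^ (J0 x y + 1) := by
    intro y hyinj hxy
    have hsum : ∑ b2 ∈ ({0, 1} : Finset ℤ), rrel x y b1 b2
        = rrel x y b1 0 + rrel x y b1 1 :=
      Finset.sum_pair (by norm_num)
    have hdiag : ∀ b : ℤ, rrel x y b b = 0 := by
      intro b
      unfold rrel rstar
      split_ifs with h1 h2
      · rfl
      · rfl
      · exact absurd (Or.inl rfl) h2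
    have hval : ∀ b2 : ℤ, b1 ≠ b2 → rrel x y b1 b2 = (n : ℝ) ^ (J0 x y + 1) := by
      intro b2 hne
      unfold rrel rstar
      rw [if_neg hxy, if_neg]
      push_neg
      exact ⟨hne, hxgood, hyinj⟩
    rcases hb1 with h | h <;> subst h
    · rw [hsum, hdiag 0, hval 1 (by norm_num), zero_add]
    · rw [hsum, hdiag 1, hval 0 (by norm_num), add_zero]
  -- lower bound on the inner sum on a class
  have hAval : ∀ (i : Fin L) (y : Fin (L + 1) → Fin n), y ∈ A i.succ →
      (n : ℝ) ^ ((i : ℕ) + 1) ≤ ∑ b2 ∈ ({0, 1} : Finset ℤ), rrel x y b1 b2 := by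
    intro i y hy
    simp only [hA, Finset.mem_filter, Finset.mem_univ, true_and] at hy
    obtain ⟨hyinj, hpre, hne⟩ := hy
    have hxy : x ≠ y := fun h => hne (by rw [h])
    rw [hinner y hyinj hxy]
    have hmem : (⟨(i : ℕ), by omega⟩ : Fin (L + 1)) ∈ Finset.univ.filter
        (fun t : Fin (L + 1) => ∀ k ≤ t, x k = y k) := by
      simp only [Finset.mem_filter, Finset.mem_univ, true_and]
      intro k hk
      have hk' : (k : ℕ) ≤ (i : ℕ) := hk
      exact (hpre k (by simp only [Fin.val_succ]; omega)).symm
    have hle : (i : ℕ) ≤ J0 x y := by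
      have := Finset.le_sup (f := fun t : Fin (L + 1) => (t : ℕ)) hmem
      simpa [J0] using this
    exact pow_le_pow_right₀ hn1 (by omega)
  -- classes are inside the summation set
  have hsubS : ∀ i : Fin L, A i.succ ⊆ Finset.univ.filter
      (fun y : Fin (L + 1) → Fin n => y 0 = (⟨0, by omega⟩ : Fin n)) := by
    intro i y hy
    simp only [hA, Finset.mem_filter, Finset.mem_univ, true_and] at hy ⊢
    rw [hy.2.1 0 (by simp [Fin.val_succ])]
    exact hx1
  -- classes are pairwise disjoint
  have hdisjAux : ∀ i j : Fin L, (i : ℕ) < (j : ℕ) → Disjoint (A i.succ) (A j.succ) := by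
    intro i j hij
    rw [Finset.disjoint_left]
    intro y hyi hyj
    simp only [hA, Finset.mem_filter, Finset.mem_univ, true_and] at hyi hyj
    exact hyi.2.2 (hyj.2.1 i.succ (by simp only [Fin.val_succ]; omega))
  have hdisj : (↑(Finset.univ : Finset (Fin L)) : Set (Fin L)).PairwiseDisjoint
      (fun i => A i.succ) := by
    intro i _ j _ hij
    rcases lt_or_gt_of_ne hij with h | h
    · exact hdisjAux i j (by exact_mod_cast h)
    · exact (hdisjAux j i (by exact_mod_cast h)).symm
  -- cardinality of the classes
  have hcard : ∀ i : Fin L, (A i.succ).card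
      = (n - ((i : ℕ) + 1) - 1) * (n - ((i : ℕ) + 1) - 1).descFactorial (L - ((i : ℕ) + 1)) := by
    intro i
    have := stmt4_cardA x hxgood hnL2 i.succ (by simp [Fin.val_succ])
    rw [hA]; exact this
  -- assemble
  have hU : Finset.univ.biUnion (fun i : Fin L => A i.succ) ⊆ Finset.univ.filter
      (fun y : Fin (L + 1) → Fin n => y 0 = (⟨0, by omega⟩ : Fin n)) := by
    intro y hy
    rw [Finset.mem_biUnion] at hy
    obtain ⟨i, _, hyi⟩ := hy
    exact hsubS i hyi
  calc (1 / (2 * Real.exp 1)) * (L : ℝ) * (n : ℝ) ^ (L + 1)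
      = ∑ _i : Fin L, (n : ℝ) ^ (L + 1) / (2 * Real.exp 1) := by
        rw [Finset.sum_const, Finset.card_univ, Fintype.card_fin, nsmul_eq_mul]
        ring
    _ ≤ ∑ i : Fin L, (n : ℝ) ^ ((i : ℕ) + 1) * ((A i.succ).card : ℝ) := by
        apply Finset.sum_le_sum
        intro i _
        rw [hcard i]
        exact stmt4_key_ineq n L ((i : ℕ) + 1) hL2 (by omega) (by have := i.isLt; omega) hLLn
    _ = ∑ i : Fin L, ∑ _y ∈ A i.succ, (n : ℝ) ^ ((i : ℕ) + 1) := by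
        apply Finset.sum_congr rfl
        intro i _
        rw [Finset.sum_const, nsmul_eq_mul]
        ring
    _ ≤ ∑ i : Fin L, ∑ y ∈ A i.succ, ∑ b2 ∈ ({0, 1} : Finset ℤ), rrel x y b1 b2 := by
        apply Finset.sum_le_sum
        intro i _
        exact Finset.sum_le_sum fun y hy => hAval i y hy
    _ = ∑ y ∈ Finset.univ.biUnion (fun i : Fin L => A i.succ),
          ∑ b2 ∈ ({0, 1} : Finset ℤ), rrel x y b1 b2 :=
        (Finset.sum_biUnion hdisj).symm
    _ ≤ ∑ y ∈ Finset.univ.filter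
          (fun y : Fin (L + 1) → Fin n => y 0 = (⟨0, by omega⟩ : Fin n)),
          ∑ b2 ∈ ({0, 1} : Finset ℤ), rrel x y b1 b2 :=
        Finset.sum_le_sum_of_subset_of_nonneg hU fun y _ _ => hinner_nonneg y
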